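/- Let p be a prime, let F be a finite field with p³ elements, let β : F → (ZMod p)³ be any bijection, and let y : Fin p → F be any injective map. Define the complex matrix C of size p³ × p⁶ whose rows are indexed by pairs (s, (φ, γ)) ∈ Fin p × (ZMod p)² and whose columns are indexed by pairs (u, v) ∈ F × F, with entries C((s,(φ,γ)), (u,v)) = (1/(p·√p))·e_p(γ·(a·φ + c) + b·φ), where (a, b, c) = β(u + v·y(s)). Then every column of C is a unit vector in ℂ^{p³}, and the coherence of C is at most (2p − 1)/p². -/

import Mathlib

open scoped ComplexInnerProductSpace

/-- The canonical additive character of `ZMod p`: `ep p x = exp(2πi·x̂/p)`. -/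
noncomputable def ep (p : ℕ) (x : ZMod p) : ℂ :=
  Complex.exp (2 * Real.pi * Complex.I * (x.val : ℂ) / (p : ℂ))

lemma ep_eq_std (p : ℕ) [NeZero p] (x : ZMod p) : ep p x = ZMod.stdAddChar x := by
  rw [ZMod.stdAddChar_apply, ZMod.toCircle_apply, ep]

lemma ep_add (p : ℕ) [NeZero p] (x y : ZMod p) : ep p (x + y) = ep p x * ep p y := by
  simp [ep_eq_std, AddChar.map_add_eq_mul]

lemma ep_zero (p : ℕ) [NeZero p] : ep p 0 = 1 := by
  simp [ep_eq_std]

lemma ep_norm (p : ℕ) [NeZero p] (x : ZMod p) : ‖ep p x‖ = 1 := by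
  have h : 2 * (Real.pi : ℂ) * Complex.I * (x.val : ℂ) / (p : ℂ)
      = ((2 * Real.pi * x.val / p : ℝ) : ℂ) * Complex.I := by
    push_cast; ring
  rw [ep, h, Complex.norm_exp_ofReal_mul_I]

lemma ep_ne_zero (p : ℕ) [NeZero p] (x : ZMod p) : ep p x ≠ 0 := by
  intro h
  have := ep_norm p x
  rw [h] at this; simp at this

lemma ep_conj (p : ℕ) [NeZero p] (x : ZMod p) :
    (starRingEnd ℂ) (ep p x) = ep p (-x) := by
  have h1 : ep p x * ep p (-x) = 1 := by
    rw [← ep_add]; simp [ep_zero]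
  have h2 : ep p x * (starRingEnd ℂ) (ep p x) = 1 := by
    rw [Complex.mul_conj]
    have : ‖ep p x‖ = 1 := ep_norm p x
    rw [Complex.normSq_eq_norm_sq, this]
    norm_num
  exact mul_left_cancel₀ (ep_ne_zero p x) (h2.trans h1.symm)

lemma ep_sum (p : ℕ) [NeZero p] (t : ZMod p) :
    ∑ γ : ZMod p, ep p (γ * t) = if t = 0 then (p : ℂ) else 0 := by
  simp_rw [ep_eq_std]
  rw [AddChar.sum_mulShift t (ZMod.isPrimitive_stdAddChar p), ZMod.card]
  split <;> simp

lemma term_eq (p : ℕ) [NeZero p] (cst : ℝ) (a b c a' b' c' φ γ : ZMod p) :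
    (starRingEnd ℂ) ((cst : ℂ) * ep p (γ * (a * φ + c) + b * φ)) *
      ((cst : ℂ) * ep p (γ * (a' * φ + c') + b' * φ))
    = (cst : ℂ) ^ 2 * ep p (γ * ((a' - a) * φ + (c' - c)) + (b' - b) * φ) := by
  have harg : -(γ * (a * φ + c) + b * φ) + (γ * (a' * φ + c') + b' * φ)
      = γ * ((a' - a) * φ + (c' - c)) + (b' - b) * φ := by ring
  rw [map_mul, Complex.conj_ofReal, ep_conj, mul_mul_mul_comm, ← ep_add, harg, ← sq]

lemma T_bound (p : ℕ) (hp : p.Prime) [NeZero p] (d e f : ZMod p) :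
    ‖∑ φ : ZMod p, ∑ γ : ZMod p, ep p (γ * (d * φ + f) + e * φ)‖ ≤
      if d = 0 ∧ e = 0 ∧ f = 0 then (p : ℝ) ^ 2 else (p : ℝ) := by
  haveI := Fact.mk hp
  have hp0 : (0 : ℝ) < p := by exact_mod_cast hp.pos
  have key : ∀ φ : ZMod p, ∑ γ : ZMod p, ep p (γ * (d * φ + f) + e * φ)
      = (if d * φ + f = 0 then (p : ℂ) else 0) * ep p (e * φ) := by
    intro φ
    simp_rw [ep_add, ← Finset.sum_mul, ep_sum]
  simp_rw [key]
  by_cases hd : d = 0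
  · by_cases hf : f = 0
    · have h1 : ∀ φ : ZMod p,
          (if d * φ + f = 0 then (p : ℂ) else 0) * ep p (e * φ)
          = (p : ℂ) * ep p (φ * e) := by
        intro φ; rw [if_pos (by rw [hd, hf]; ring), mul_comm e]
      simp_rw [h1]
      rw [← Finset.mul_sum, ep_sum]
      by_cases he : e = 0
      · rw [if_pos he, if_pos ⟨hd, he, hf⟩, norm_mul, Complex.norm_natCast]
        nlinarith
      · rw [if_neg he, if_neg (by tauto), mul_zero, norm_zero]
        positivity
    · rw [if_neg (by tauto)]
      have hz : ∀ φ : ZMod p,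
          (if d * φ + f = 0 then (p : ℂ) else 0) * ep p (e * φ) = 0 := by
        intro φ; rw [if_neg (by rw [hd]; simpa using hf), zero_mul]
      simp_rw [hz]
      rw [Finset.sum_const, smul_zero, norm_zero]
      positivity
  · rw [if_neg (by tauto)]
    have hcond : ∀ φ : ZMod p,
        (if d * φ + f = 0 then (p : ℂ) else 0) * ep p (e * φ)
        = if φ = -f / d then (p : ℂ) * ep p (e * φ) else 0 := by
      intro φ
      have hiff : (d * φ + f = 0) ↔ (φ = -f / d) := by
        rw [eq_div_iff hd]
        constructor
        · intro h; linear_combination h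
        · intro h; linear_combination h
      by_cases hφ : φ = -f / d
      · rw [if_pos (hiff.2 hφ), if_pos hφ]
      · rw [if_neg (fun hh => hφ (hiff.1 hh)), if_neg hφ, zero_mul]
    simp_rw [hcond]
    rw [Finset.sum_ite_eq' Finset.univ, if_pos (Finset.mem_univ _), norm_mul,
      Complex.norm_natCast, ep_norm, mul_one]

theorem stmt10 (p : ℕ) (hp : p.Prime) [NeZero p]
    {F : Type*} [Field F] [Fintype F] (hF : Fintype.card F = p ^ 3)
    (β : F → ZMod p × ZMod p × ZMod p) (hβ : Function.Bijective β)
    (y : Fin p → F) (hy : Function.Injective y)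
    (C : F × F → EuclideanSpace ℂ (Fin p × (ZMod p × ZMod p)))
    (hC : ∀ u v : F, C (u, v) = WithLp.toLp 2 (fun row =>
      ((1 / ((p : ℝ) * Real.sqrt p) : ℝ) : ℂ) *
        ep p (row.2.2 * ((β (u + v * y row.1)).1 * row.2.1 + (β (u + v * y row.1)).2.2) +
          (β (u + v * y row.1)).2.1 * row.2.1))) :
    (∀ q, ‖C q‖ = 1) ∧
    ∀ q q' : F × F, q ≠ q' →
      ‖⟪C q, C q'⟫‖ ≤ (2 * (p : ℝ) - 1) / (p : ℝ) ^ 2 := by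
  classical
  have hp0 : (0 : ℝ) < p := by exact_mod_cast hp.pos
  have hsq : ((p : ℝ) * Real.sqrt p) ^ 2 = (p : ℝ) ^ 3 := by
    rw [mul_pow, Real.sq_sqrt hp0.le]; ring
  have hcst : (1 / ((p : ℝ) * Real.sqrt p)) ^ 2 = 1 / (p : ℝ) ^ 3 := by
    rw [div_pow, one_pow, hsq]
  have hcard : Fintype.card (Fin p × (ZMod p × ZMod p)) = p ^ 3 := by
    simp [ZMod.card]; ring
  constructor
  · rintro ⟨u, v⟩
    rw [hC u v, EuclideanSpace.norm_eq]
    simp only [norm_mul, Complex.norm_real, ep_norm, mul_one, Real.norm_eq_abs, sq_abs]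
    rw [Finset.sum_const, Finset.card_univ, hcard, nsmul_eq_mul, hcst]
    rw [mul_one_div]
    push_cast
    rw [div_self (by positivity), Real.sqrt_one]
  · rintro ⟨u, v⟩ ⟨u', v'⟩ hne
    rw [hC u v, hC u' v', PiLp.inner_apply]
    simp only [RCLike.inner_apply', PiLp.toLp_apply]
    simp_rw [term_eq]
    rw [← Finset.mul_sum, norm_mul, norm_pow, Complex.norm_real, Real.norm_eq_abs,
      abs_of_nonneg (by positivity)]
    set cst : ℝ := 1 / ((p : ℝ) * Real.sqrt p) with hcstdef
    have hsplit : (∑ row : Fin p × (ZMod p × ZMod p),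
        ep p (row.2.2 * (((β (u' + v' * y row.1)).1 - (β (u + v * y row.1)).1) * row.2.1 +
            ((β (u' + v' * y row.1)).2.2 - (β (u + v * y row.1)).2.2)) +
          ((β (u' + v' * y row.1)).2.1 - (β (u + v * y row.1)).2.1) * row.2.1))
        = ∑ s : Fin p, ∑ φ : ZMod p, ∑ γ : ZMod p,
            ep p (γ * (((β (u' + v' * y s)).1 - (β (u + v * y s)).1) * φ +
                ((β (u' + v' * y s)).2.2 - (β (u + v * y s)).2.2)) +
              ((β (u' + v' * y s)).2.1 - (β (u + v * y s)).2.1) * φ) := by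
      rw [Fintype.sum_prod_type]
      exact Finset.sum_congr rfl fun s _ => by rw [Fintype.sum_prod_type]
    rw [hsplit]
    have hiff : ∀ s : Fin p,
        ((β (u' + v' * y s)).1 - (β (u + v * y s)).1 = 0 ∧
         (β (u' + v' * y s)).2.1 - (β (u + v * y s)).2.1 = 0 ∧
         (β (u' + v' * y s)).2.2 - (β (u + v * y s)).2.2 = 0) ↔
        u + v * y s = u' + v' * y s := by
      intro s
      simp only [sub_eq_zero]
      constructor
      · rintro ⟨h1, h2, h3⟩
        exact (hβ.1 (Prod.ext h1 (Prod.ext h2 h3))).symm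
      · intro h
        rw [h]
        exact ⟨rfl, rfl, rfl⟩
    have hTs : ∀ s : Fin p,
        ‖∑ φ : ZMod p, ∑ γ : ZMod p,
            ep p (γ * (((β (u' + v' * y s)).1 - (β (u + v * y s)).1) * φ +
                ((β (u' + v' * y s)).2.2 - (β (u + v * y s)).2.2)) +
              ((β (u' + v' * y s)).2.1 - (β (u + v * y s)).2.1) * φ)‖ ≤
          (p : ℝ) + (if u + v * y s = u' + v' * y s then (p : ℝ) ^ 2 - p else 0) := by
      intro s
      have h := T_bound p hp ((β (u' + v' * y s)).1 - (β (u + v * y s)).1)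
        ((β (u' + v' * y s)).2.1 - (β (u + v * y s)).2.1)
        ((β (u' + v' * y s)).2.2 - (β (u + v * y s)).2.2)
      by_cases hc : u + v * y s = u' + v' * y s
      · rw [if_pos hc]
        rw [if_pos ((hiff s).2 hc)] at h
        linarith
      · rw [if_neg hc]
        rw [if_neg (fun hh => hc ((hiff s).1 hh))] at h
        simpa using h
    have hbad : (Finset.univ.filter (fun s : Fin p => u + v * y s = u' + v' * y s)).card ≤ 1 := by
      rw [Finset.card_le_one]
      intro s₁ h₁ s₂ h₂
      simp only [Finset.mem_filter] at h₁ h₂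
      by_cases hv : v = v'
      · exfalso
        apply hne
        have hu : u = u' := by
          have h := h₁.2; rw [hv] at h; exact add_right_cancel h
        rw [hu, hv]
      · apply hy
        have hvv : v - v' ≠ 0 := sub_ne_zero.2 hv
        have e1 : (v - v') * y s₁ = u' - u := by linear_combination h₁.2
        have e2 : (v - v') * y s₂ = u' - u := by linear_combination h₂.2
        exact mul_left_cancel₀ hvv (e1.trans e2.symm)
    have hsum : ∑ s : Fin p,
        ((p : ℝ) + (if u + v * y s = u' + v' * y s then (p : ℝ) ^ 2 - p else 0)) ≤
        2 * (p : ℝ) ^ 2 - p := by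
      rw [Finset.sum_add_distrib, Finset.sum_const, Finset.card_univ, Fintype.card_fin,
        Finset.sum_ite, Finset.sum_const, Finset.sum_const, smul_zero, add_zero,
        nsmul_eq_mul, nsmul_eq_mul]
      have h1 : ((Finset.univ.filter
          (fun s : Fin p => u + v * y s = u' + v' * y s)).card : ℝ) ≤ 1 := by
        exact_mod_cast hbad
      have hp1 : (1 : ℝ) ≤ (p : ℝ) := by exact_mod_cast hp.one_lt.le
      have h2 : (0 : ℝ) ≤ (p : ℝ) ^ 2 - p := by nlinarith
      nlinarith
    calc cst ^ 2 * ‖∑ s : Fin p, ∑ φ : ZMod p, ∑ γ : ZMod p,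
          ep p (γ * (((β (u' + v' * y s)).1 - (β (u + v * y s)).1) * φ +
              ((β (u' + v' * y s)).2.2 - (β (u + v * y s)).2.2)) +
            ((β (u' + v' * y s)).2.1 - (β (u + v * y s)).2.1) * φ)‖
        ≤ cst ^ 2 * ∑ s : Fin p,
            ((p : ℝ) + (if u + v * y s = u' + v' * y s then (p : ℝ) ^ 2 - p else 0)) := by
          apply mul_le_mul_of_nonneg_left _ (by positivity)
          exact le_trans (norm_sum_le _ _) (Finset.sum_le_sum fun s _ => hTs s)
      _ ≤ cst ^ 2 * (2 * (p : ℝ) ^ 2 - p) := by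
          apply mul_le_mul_of_nonneg_left hsum (by positivity)
      _ = (2 * (p : ℝ) - 1) / (p : ℝ) ^ 2 := by
          rw [hcstdef, hcst]
          field_simp
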